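/- Let k be a positive integer and d an integer with 0 ≤ d ≤ k-1. Define the (k-d)×(k-d) matrix C(k,d) over the rationals with entries C(k,d)_{s,t} = 2^{k-d+s-t} · binomial(k, k-d+s-t) for 1 ≤ s,t ≤ k-d, where binomial(k, m) is taken to be 0 if m > k or m < 0. Then the matrix C(k,d) is invertible (nonsingular). -/
import Mathlib

open Matrix Finset Polynomial

lemma deriv_dvd {a : ℚ} {k : ℕ} {p : ℚ[X]} (h : (X - C a)^(k+1) ∣ p) :
    (X - C a)^k ∣ derivative p := by
  obtain ⟨g, rfl⟩ := h
  rw [derivative_mul, derivative_pow, Nat.add_sub_cancel]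
  exact dvd_add ((((dvd_refl _).mul_left _).mul_right _).mul_right _)
    ((pow_dvd_pow _ (Nat.le_succ k)).mul_right _)

lemma sparse_vanish : ∀ (k : ℕ) (p : ℚ[X]) (a : ℚ), a ≠ 0 →
    p.support.card ≤ k → (X - C a)^k ∣ p → p = 0 := by
  intro k
  induction k with
  | zero =>
    intro p a _ hcard _
    exact Polynomial.support_eq_empty.mp (Finset.card_eq_zero.mp (Nat.le_zero.mp hcard))
  | succ k ih =>
    intro p a ha hcard hdvd
    by_cases hp : p = 0
    · exact hp
    obtain ⟨e, he⟩ := Finset.Nonempty.exists_mem (Polynomial.nonempty_support_iff.mpr hp)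
    set q : ℚ[X] := X * derivative p - C (e : ℚ) * p with hqdef
    have hcq : ∀ i, q.coeff i = ((i : ℚ) - e) * p.coeff i := by
      intro i
      have h1 : (X * derivative p).coeff i = (i : ℚ) * p.coeff i := by
        cases i with
        | zero => simp
        | succ m => rw [coeff_X_mul, coeff_derivative]; push_cast; ring
      rw [hqdef, coeff_sub, h1, coeff_C_mul]
      ring
    have hq_supp : q.support ⊆ p.support.erase e := by
      intro i hi
      rw [mem_support_iff, hcq] at hi
      rcases mul_ne_zero_iff.mp hi with ⟨h1, h2⟩
      refine Finset.mem_erase.mpr ⟨?_, mem_support_iff.mpr h2⟩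
      intro hie; apply h1; rw [hie]; ring
    have hcard' : q.support.card ≤ k := by
      calc q.support.card ≤ (p.support.erase e).card := Finset.card_le_card hq_supp
        _ ≤ p.support.card - 1 := le_of_eq (Finset.card_erase_of_mem he)
        _ ≤ k := by omega
    have hdvd' : (X - C a)^k ∣ q := by
      refine dvd_sub (Dvd.dvd.mul_left (deriv_dvd hdvd) _) (Dvd.dvd.mul_left ?_ _)
      exact (pow_dvd_pow _ (Nat.le_succ k)).trans hdvd
    have hq0 := ih q a ha hcard' hdvd'
    have hpe : p = C (p.coeff e) * X ^ e := by
      ext i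
      rcases eq_or_ne i e with hie | hie
      · simp [hie]
      · have h0 : ((i : ℚ) - e) * p.coeff i = 0 := by rw [← hcq, hq0, coeff_zero]
        have : p.coeff i = 0 := by
          rcases mul_eq_zero.mp h0 with h | h
          · exfalso; apply hie; have : (i : ℚ) = e := by linarith
            exact_mod_cast this
          · exact h
        simp [this, coeff_C_mul, coeff_X_pow, hie]
    exfalso
    have hdvd1 : (X - C a) ∣ C (p.coeff e) * X ^ e := by
      rw [← hpe]
      exact (dvd_pow_self _ (Nat.succ_ne_zero k)).trans hdvd
    have := (dvd_iff_isRoot).mp hdvd1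
    rw [IsRoot, eval_mul, eval_C, eval_pow, eval_X] at this
    have hce : p.coeff e ≠ 0 := mem_support_iff.mp he
    rcases mul_eq_zero.mp this with h | h
    · exact hce h
    · exact ha (pow_eq_zero_iff' .. |>.mp h).1

/-- The matrix `𝐂(k,d)` with entries `𝐂(k,d)_{s,t} = 2^{k-d+s-t} · C(k, k-d+s-t)`
(for `1 ≤ s,t ≤ k-d`, here written with 0-based indices in `Fin (k-d)`;
note `C(k,m) = 0` for `m > k`) is invertible, for every `k ≥ 1` and `0 ≤ d ≤ k-1`. -/
theorem matC_invertible (k d : ℕ) (hk : 0 < k) (hd : d ≤ k - 1) :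
    IsUnit (Matrix.of fun s t : Fin (k - d) =>
      ((2 ^ (k - d + s.val - t.val) * Nat.choose k (k - d + s.val - t.val) : ℕ) : ℚ)) := by
  set n := k - d with hn
  have hn0 : 0 < n := by omega
  have hnd : n + d = k := by omega
  set M : Matrix (Fin n) (Fin n) ℚ := Matrix.of fun s t : Fin n =>
      ((2 ^ (n + s.val - t.val) * Nat.choose k (n + s.val - t.val) : ℕ) : ℚ) with hM
  have key : ∀ v : Fin n → ℚ, M.mulVec v = 0 → v = 0 := by
    intro v hv
    set P : ℚ[X] := (C 2 * X + 1)^k with hPdef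
    have hPsum : P = ∑ j ∈ Finset.range (k+1), C ((2:ℚ)^j * (Nat.choose k j : ℚ)) * X^j := by
      rw [hPdef, add_pow]
      refine Finset.sum_congr rfl fun j _ => ?_
      rw [one_pow, mul_one, mul_pow, ← C_pow, ← Polynomial.C_eq_natCast, C_mul]
      ring
    have hPc : ∀ m, P.coeff m = 2^m * (Nat.choose k m : ℚ) := by
      intro m
      rw [hPsum, finset_sum_coeff]
      simp only [coeff_C_mul, coeff_X_pow, mul_ite, mul_one, mul_zero]
      rw [Finset.sum_ite_eq (Finset.range (k+1)) m]
      split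
      · rfl
      · rename_i h
        have : Nat.choose k m = 0 := Nat.choose_eq_zero_of_lt (by simp at h; omega)
        simp [this]
    set q : ℚ[X] := ∑ t : Fin n, C (v t) * X^(t:ℕ) with hqdef
    set p : ℚ[X] := P * q with hpdef
    have hpc : ∀ m, p.coeff m = ∑ t : Fin n,
        v t * (if (t:ℕ) ≤ m then ((2:ℚ)^(m - t) * (Nat.choose k (m - t) : ℚ)) else 0) := by
      intro m
      have hps : p = ∑ t : Fin n, C (v t) * (P * X^(t:ℕ)) := by
        rw [hpdef, hqdef, Finset.mul_sum]
        exact Finset.sum_congr rfl fun t _ => by ring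
      rw [hps, finset_sum_coeff]
      refine Finset.sum_congr rfl fun t _ => ?_
      rw [coeff_C_mul, coeff_mul_X_pow']
      by_cases h : (t:ℕ) ≤ m
      · rw [if_pos h, if_pos h, hPc]
      · rw [if_neg h, if_neg h, mul_zero]
    have h1 : ∀ m, n ≤ m → m < 2*n → p.coeff m = 0 := by
      intro m hm1 hm2
      have hs : m - n < n := by omega
      have hvs := congrFun hv ⟨m - n, hs⟩
      rw [Matrix.mulVec, Pi.zero_apply] at hvs
      rw [hpc m, ← hvs, dotProduct]
      refine Finset.sum_congr rfl fun t _ => ?_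
      have ht : (t : ℕ) < n := t.isLt
      have hidx : n + (m - n) - (t:ℕ) = m - (t:ℕ) := by omega
      have htm : (t:ℕ) ≤ m := by omega
      rw [hM, Matrix.of_apply]
      simp only [hidx, if_pos htm]
      push_cast
      ring
    have h2 : ∀ m, n + k ≤ m → p.coeff m = 0 := by
      intro m hm
      rw [hpc m]
      refine Finset.sum_eq_zero fun t _ => ?_
      have ht : (t : ℕ) < n := t.isLt
      split
      · have : Nat.choose k (m - t) = 0 := Nat.choose_eq_zero_of_lt (by omega)
        simp [this]
      · simp
    have hsupp : p.support ⊆ Finset.range n ∪ Finset.Ico (2*n) (n+k) := by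
      intro i hi
      rw [mem_support_iff] at hi
      simp only [Finset.mem_union, Finset.mem_range, Finset.mem_Ico]
      by_contra hcon
      push_neg at hcon
      rcases Nat.lt_or_ge i (2*n) with h' | h'
      · exact hi (h1 i hcon.1 h')
      · exact hi (h2 i (hcon.2 h'))
    have hcard : p.support.card ≤ k := by
      calc p.support.card ≤ (Finset.range n ∪ Finset.Ico (2*n) (n+k)).card :=
            Finset.card_le_card hsupp
        _ ≤ (Finset.range n).card + (Finset.Ico (2*n) (n+k)).card := Finset.card_union_le _ _
        _ = n + (n + k - 2*n) := by rw [Finset.card_range, Nat.card_Ico]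
        _ ≤ k := by omega
    have hfact : C 2 * X + 1 = C 2 * (X - C (-1/2 : ℚ)) := by
      rw [mul_sub, ← C_mul]
      norm_num
    have hdvd : (X - C (-1/2 : ℚ))^k ∣ p := by
      rw [hpdef, hPdef, hfact, mul_pow]
      exact ((dvd_refl _).mul_left _).mul_right _
    have hp0 : p = 0 := sparse_vanish k p (-1/2) (by norm_num) hcard hdvd
    have hP0 : P ≠ 0 := by
      rw [hPdef]
      apply pow_ne_zero
      intro h
      have := congrArg (Polynomial.eval 0) h
      simp at this
    have hq0 : q = 0 := by
      rcases mul_eq_zero.mp (hpdef ▸ hp0) with h | h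
      · exact absurd h hP0
      · exact h
    funext t
    have hco := congrArg (fun r => Polynomial.coeff r (t:ℕ)) hq0
    simp only [hqdef, finset_sum_coeff, coeff_C_mul, coeff_X_pow, coeff_zero] at hco
    rw [Finset.sum_eq_single t] at hco
    · simpa using hco
    · intro b _ hb
      have : (t:ℕ) ≠ (b:ℕ) := fun h => hb (Fin.ext h.symm)
      simp [this]
    · intro h; exact absurd (Finset.mem_univ t) h
  rw [← Matrix.mulVec_injective_iff_isUnit]
  intro v w hvw
  have h := key (v - w) (by rw [Matrix.mulVec_sub, hvw, sub_self])
  exact sub_eq_zero.mp h
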